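/- arXiv:2510.17060 — 2 statements merged into one kernel-verified Lean document; each statement's English description precedes it below -/
import Mathlib

section
/- Let (Z,d) be a metric space, let 0 < τ ≤ 10^{−10}, r > 0, and let C ⊆ Z be a set of diameter at most 4r. Suppose there is a map π : C → ℝ satisfying (1 − 2τ) d(X,Y) ≤ |π(X) − π(Y)| ≤ d(X,Y) for all X, Y ∈ C. Let r_• : C → [0, ∞) be a function with r_X ≤ 2r for all X ∈ C, such that the open balls B(X, τ² r_X), for those X ∈ C with r_X > 0, are pairwise disjoint. Then the set C₊ = {X ∈ C : r_X > 0} is countable, and ∑_{X ∈ C₊} r_X + H¹({X ∈ C : r_X = 0}) ≤ 50 τ^{−2} r, where H¹ denotes the 1-dimensional Hausdorff measure on (Z,d). -/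
open MeasureTheory Metric
open scoped ENNReal NNReal

/-- Content estimate for the centers of a cylindrical region: if `C` has diameter at most
`4r`, admits a map `π` to the line that is bi-Lipschitz with constants `(1 − 2τ)` and `1`,
the radii satisfy `r_X ≤ 2r`, and the balls `B(X, τ² r_X)` with `r_X > 0` are pairwise
disjoint, then `{X ∈ C : r_X > 0}` is countable and
`∑_{r_X > 0} r_X + H¹({X ∈ C : r_X = 0}) ≤ 50 τ⁻² r`. -/
theorem content_estimate_of_center_set {Z : Type*} [MetricSpace Z]
    [MeasurableSpace Z] [BorelSpace Z]
    (τ r : ℝ) (hτ : 0 < τ) (hτ' : τ ≤ 10 ^ (-10 : ℤ)) (hr : 0 < r)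
    (C : Set Z) (hdiam : EMetric.diam C ≤ ENNReal.ofReal (4 * r))
    (π : Z → ℝ)
    (hπ : ∀ X ∈ C, ∀ Y ∈ C,
      (1 - 2 * τ) * dist X Y ≤ |π X - π Y| ∧ |π X - π Y| ≤ dist X Y)
    (rfun : Z → ℝ) (hrnonneg : ∀ X ∈ C, 0 ≤ rfun X) (hrle : ∀ X ∈ C, rfun X ≤ 2 * r)
    (hdisj : ({X ∈ C | 0 < rfun X}).Pairwise
      (fun X Y => Disjoint (Metric.ball X (τ ^ 2 * rfun X)) (Metric.ball Y (τ ^ 2 * rfun Y)))) :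
    ({X ∈ C | 0 < rfun X}).Countable ∧
    (∑' X : {X : Z // X ∈ C ∧ 0 < rfun X}, ENNReal.ofReal (rfun X.1)) +
      μH[1] {X ∈ C | rfun X = 0} ≤ ENNReal.ofReal (50 * (τ ^ 2)⁻¹ * r) := by
  have hτq : τ ≤ 1/4 := hτ'.trans (by norm_num)
  have hτ1 : τ ≤ 1 := hτq.trans (by norm_num)
  have hτ2 : (0:ℝ) < τ^2 := by positivity
  have hτ2le : τ^2 ≤ 1 := by nlinarith
  -- separation of projected centers
  have hsep : ∀ X ∈ C, 0 < rfun X → ∀ Y ∈ C, 0 < rfun Y → X ≠ Y →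
      τ^2/4 * rfun X + τ^2/4 * rfun Y ≤ dist (π X) (π Y) := by
    intro X hX hrX Y hY hrY hne
    have hd := hdisj (Set.mem_sep hX hrX) (Set.mem_sep hY hrY) hne
    have h1 : τ^2 * rfun X ≤ dist X Y := by
      have hYnot : Y ∉ Metric.ball X (τ^2 * rfun X) :=
        Set.disjoint_right.mp hd (mem_ball_self (by positivity))
      have := not_lt.mp (fun h => hYnot (mem_ball'.mpr h))
      linarith
    have h2 : τ^2 * rfun Y ≤ dist X Y := by
      have hXnot : X ∉ Metric.ball Y (τ^2 * rfun Y) :=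
        Set.disjoint_left.mp hd (mem_ball_self (by positivity))
      exact not_lt.mp (fun h => hXnot (mem_ball.mpr h))
    have hlow := (hπ X hX Y hY).1
    rw [Real.dist_eq]
    nlinarith [dist_nonneg (x := X) (y := Y),
      mul_nonneg (by linarith : (0:ℝ) ≤ 1/2 - 2*τ) (dist_nonneg (x := X) (y := Y))]
  -- countability
  have hcount : ({X ∈ C | 0 < rfun X}).Countable := by
    have hpd : ({X ∈ C | 0 < rfun X}).PairwiseDisjoint
        (fun X => Metric.ball (π X) (τ^2/4 * rfun X)) := by
      intro X hX Y hY hne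
      exact Metric.ball_disjoint_ball (hsep X hX.1 hX.2 Y hY.1 hY.2 hne)
    exact hpd.countable_of_isOpen (fun X _ => isOpen_ball)
      (fun X hX => ⟨π X, mem_ball_self (by have := hX.2; positivity)⟩)
  refine ⟨hcount, ?_⟩
  -- sum estimate
  have hsum : (∑' X : {X : Z // X ∈ C ∧ 0 < rfun X}, ENNReal.ofReal (rfun X.1)) ≤
      ENNReal.ofReal (20 * (τ^2)⁻¹ * r) := by
    rcases isEmpty_or_nonempty {X : Z // X ∈ C ∧ 0 < rfun X} with hE | hNE
    · rw [tsum_congr (fun i => hE.elim i), tsum_zero]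
      exact zero_le
    · haveI : Countable {X : Z // X ∈ C ∧ 0 < rfun X} := hcount.to_subtype
      obtain ⟨⟨X₀, hX₀C, hX₀r⟩⟩ := hNE
      set f : {X : Z // X ∈ C ∧ 0 < rfun X} → Set ℝ :=
        fun X => Metric.ball (π X.1) (τ^2/4 * rfun X.1) with hf
      have hpw : Pairwise (Function.onFun Disjoint f) := by
        intro i j hij
        exact Metric.ball_disjoint_ball
          (hsep i.1 i.2.1 i.2.2 j.1 j.2.1 j.2.2 (fun h => hij (Subtype.ext h)))
      have h1 : volume (⋃ i, f i) = ∑' i, volume (f i) :=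
        measure_iUnion hpw (fun i => measurableSet_ball)
      have hsub : ∀ i, f i ⊆ Metric.ball (π X₀) (5*r) := by
        intro i x hx
        have hdXX : dist i.1 X₀ ≤ 4*r := by
          have h := (EMetric.edist_le_diam_of_mem i.2.1 hX₀C).trans hdiam
          rw [edist_dist] at h
          exact (ENNReal.ofReal_le_ofReal_iff (by positivity)).mp h
        have hπd : dist (π i.1) (π X₀) ≤ 4*r := by
          rw [Real.dist_eq]
          exact le_trans (hπ i.1 i.2.1 X₀ hX₀C).2 hdXX
        have hx' : dist x (π i.1) < τ^2/4 * rfun i.1 := mem_ball.mp hx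
        have hrl : rfun i.1 ≤ 2*r := hrle i.1 i.2.1
        have hrad : τ^2/4 * rfun i.1 ≤ r/2 := by nlinarith [i.2.2]
        refine mem_ball.mpr ?_
        calc dist x (π X₀) ≤ dist x (π i.1) + dist (π i.1) (π X₀) := dist_triangle _ _ _
          _ < 5*r := by linarith
      have h2 : volume (⋃ i, f i) ≤ ENNReal.ofReal (10 * r) := by
        refine le_trans (measure_mono (Set.iUnion_subset hsub)) ?_
        rw [Real.volume_ball]
        exact ENNReal.ofReal_le_ofReal (by linarith)
      have h3 : ∀ i, volume (f i) = ENNReal.ofReal (τ^2/2) * ENNReal.ofReal (rfun i.1) := by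
        intro i
        rw [hf]
        rw [Real.volume_ball, show 2*(τ^2/4 * rfun i.1) = τ^2/2 * rfun i.1 from by ring,
          ENNReal.ofReal_mul (by positivity)]
      have h4 : ENNReal.ofReal (τ^2/2) *
          (∑' i : {X : Z // X ∈ C ∧ 0 < rfun X}, ENNReal.ofReal (rfun i.1)) ≤
          ENNReal.ofReal (10*r) := by
        rw [← ENNReal.tsum_mul_left]
        calc (∑' i, ENNReal.ofReal (τ^2/2) * ENNReal.ofReal (rfun i.1))
            = ∑' i, volume (f i) := tsum_congr (fun i => (h3 i).symm)
          _ = volume (⋃ i, f i) := h1.symm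
          _ ≤ ENNReal.ofReal (10*r) := h2
      have hpos : (0:ℝ) < τ^2/2 := by positivity
      have h4' : (∑' i : {X : Z // X ∈ C ∧ 0 < rfun X}, ENNReal.ofReal (rfun i.1)) *
          ENNReal.ofReal (τ^2/2) ≤ ENNReal.ofReal (10*r) := by
        rwa [mul_comm] at h4
      have h5 := (ENNReal.le_div_iff_mul_le
        (Or.inl (ENNReal.ofReal_pos.mpr hpos).ne')
        (Or.inl ENNReal.ofReal_ne_top)).mpr h4'
      refine h5.trans ?_
      rw [← ENNReal.ofReal_div_of_pos hpos]
      apply ENNReal.ofReal_le_ofReal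
      rw [show (10*r)/(τ^2/2) = 20 * (τ^2)⁻¹ * r from by field_simp; ring]
  -- Hausdorff measure estimate
  have hH : μH[1] ({X ∈ C | rfun X = 0} : Set Z) ≤ ENNReal.ofReal (8*r) := by
    rcases ({X ∈ C | rfun X = 0} : Set Z).eq_empty_or_nonempty with h0 | ⟨x₀, hx₀⟩
    · rw [h0]
      simp only [measure_empty]
      exact zero_le
    · haveI : Nonempty Z := ⟨x₀⟩
      set C₀ : Set Z := {X ∈ C | rfun X = 0} with hC₀
      have hinj : Set.InjOn π C := by
        intro a ha b hb hab
        by_contra hne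
        have h1 := (hπ a ha b hb).1
        have hd : 0 < dist a b := dist_pos.mpr hne
        rw [hab, sub_self, abs_zero] at h1
        nlinarith
      set g := Function.invFunOn π C with hg
      have himg : g '' (π '' C₀) = C₀ :=
        hinj.invFunOn_image (fun x hx => hx.1)
      have hglip : LipschitzOnWith 2 g (π '' C₀) := by
        rw [lipschitzOnWith_iff_dist_le_mul]
        rintro a ⟨X, hX, rfl⟩ b ⟨Y, hY, rfl⟩
        rw [hg, hinj.leftInvOn_invFunOn hX.1, hinj.leftInvOn_invFunOn hY.1, Real.dist_eq]
        have h1 := (hπ X hX.1 Y hY.1).1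
        have := dist_nonneg (x := X) (y := Y)
        push_cast
        nlinarith
      have hbound := hglip.hausdorffMeasure_image_le (le_of_lt one_pos)
      rw [himg] at hbound
      have hdiam0 : EMetric.diam (π '' C₀) ≤ ENNReal.ofReal (4*r) := by
        apply EMetric.diam_le
        rintro a ⟨X, hX, rfl⟩ b ⟨Y, hY, rfl⟩
        rw [edist_dist, Real.dist_eq]
        have h2 := (hπ X hX.1 Y hY.1).2
        have h3 : dist X Y ≤ 4*r := by
          have h := (EMetric.edist_le_diam_of_mem hX.1 hY.1).trans hdiam
          rw [edist_dist] at h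
          exact (ENNReal.ofReal_le_ofReal_iff (by positivity)).mp h
        exact ENNReal.ofReal_le_ofReal (by linarith)
      have hvol : μH[1] (π '' C₀) ≤ ENNReal.ofReal (4*r) := by
        rw [MeasureTheory.hausdorffMeasure_real]
        exact (Real.volume_le_diam _).trans hdiam0
      calc μH[1] C₀ ≤ ((2:ℝ≥0):ℝ≥0∞)^(1:ℝ) * μH[1] (π '' C₀) := hbound
        _ = 2 * μH[1] (π '' C₀) := by rw [ENNReal.rpow_one]; norm_num
        _ ≤ 2 * ENNReal.ofReal (4*r) := mul_le_mul_right hvol _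
        _ = ENNReal.ofReal (8*r) := by
            rw [show (2:ℝ≥0∞) = ENNReal.ofReal 2 from by norm_num,
              ← ENNReal.ofReal_mul (by norm_num)]
            ring_nf
  -- combine
  have hinv : (1:ℝ) ≤ (τ^2)⁻¹ := by rw [le_inv_comm₀ one_pos hτ2] <;> simpa using hτ2le
  calc (∑' X : {X : Z // X ∈ C ∧ 0 < rfun X}, ENNReal.ofReal (rfun X.1)) +
        μH[1] {X ∈ C | rfun X = 0}
      ≤ ENNReal.ofReal (20 * (τ^2)⁻¹ * r) + ENNReal.ofReal (8*r) := add_le_add hsum hH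
    _ = ENNReal.ofReal (20 * (τ^2)⁻¹ * r + 8*r) :=
        (ENNReal.ofReal_add (by positivity) (by positivity)).symm
    _ ≤ ENNReal.ofReal (50 * (τ^2)⁻¹ * r) := by
        apply ENNReal.ofReal_le_ofReal
        have : r ≤ (τ^2)⁻¹ * r := le_mul_of_one_le_left hr.le hinv
        nlinarith
end

section
/- Let (Z,d) be a metric space, let 0 < τ ≤ 10^{−10}, r > 0, and let C ⊆ Z be a nonempty set of diameter at most 4r admitting a map π : C → ℝ with (1 − 2τ) d(X,Y) ≤ |π(X) − π(Y)| ≤ d(X,Y) for all X, Y ∈ C. Let μ be a Borel measure on Z, let Λ > 0, and let 0 < s ≤ r be such that μ(B(X, 2s)) ≤ Λ s⁴ for every X ∈ C. Then the closed s-neighborhood of C satisfies μ({z ∈ Z : dist(z, C) ≤ s}) ≤ 10 Λ s³ r. -/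
open MeasureTheory Metric

/-- Volume estimate for neighborhoods of the center set: if `C` is nonempty of diameter at
most `4r`, admits a map `π` to the line which is bi-Lipschitz with constants `(1 − 2τ)`
and `1`, and `μ(B(X, 2s)) ≤ Λ s⁴` for all `X ∈ C`, then the closed `s`-neighborhood of `C`
has measure at most `10 Λ s³ r`. -/
theorem volume_estimate_of_center_neighborhood {Z : Type*} [MetricSpace Z]
    [MeasurableSpace Z]
    (τ r : ℝ) (hτ : 0 < τ) (hτ' : τ ≤ 10 ^ (-10 : ℤ)) (hr : 0 < r)
    (C : Set Z) (hC : C.Nonempty) (hdiam : EMetric.diam C ≤ ENNReal.ofReal (4 * r))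
    (π : Z → ℝ)
    (hπ : ∀ X ∈ C, ∀ Y ∈ C,
      (1 - 2 * τ) * dist X Y ≤ |π X - π Y| ∧ |π X - π Y| ≤ dist X Y)
    (μ : Measure Z) (Λ : ℝ) (hΛ : 0 < Λ)
    (s : ℝ) (hs : 0 < s) (hsr : s ≤ r)
    (hball : ∀ X ∈ C, μ (Metric.ball X (2 * s)) ≤ ENNReal.ofReal (Λ * s ^ 4)) :
    μ {z : Z | Metric.infDist z C ≤ s} ≤ ENNReal.ofReal (10 * Λ * s ^ 3 * r) := by
  obtain ⟨X₀, hX₀⟩ := hC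
  have hτ18 : τ ≤ 1 / 18 := le_trans hτ' (by norm_num)
  have hu : (8 : ℝ) / 9 ≤ 1 - 2 * τ := by linarith
  set δ : ℝ := (1 - 2 * τ) * (s / 2) with hδdef
  have hδ : 0 < δ := by
    have : (0:ℝ) < 1 - 2 * τ := by linarith
    positivity
  -- distances in C are at most 4r
  have hdist4r : ∀ X ∈ C, ∀ Y ∈ C, dist X Y ≤ 4 * r := by
    intro X hX Y hY
    have h1 : edist X Y ≤ ENNReal.ofReal (4 * r) :=
      le_trans (EMetric.edist_le_diam_of_mem hX hY) hdiam
    rw [edist_dist] at h1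
    exact (ENNReal.ofReal_le_ofReal_iff (by linarith)).mp h1
  -- maximal (s/2)-separated subset via Zorn
  set P : Set (Set Z) := {T | T ⊆ C ∧ ∀ x ∈ T, ∀ y ∈ T, x ≠ y → s / 2 ≤ dist x y} with hPdef
  have h0 : ({X₀} : Set Z) ∈ P := by
    constructor
    · simpa using hX₀
    · intro x hx y hy hxy
      simp only [Set.mem_singleton_iff] at hx hy
      exact absurd (hx.trans hy.symm) hxy
  obtain ⟨S, hsub, hSmax⟩ := zorn_subset_nonempty P (fun c hcP hchain hcne => by
    refine ⟨⋃₀ c, ⟨?_, ?_⟩, fun t ht => Set.subset_sUnion_of_mem ht⟩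
    · intro x hx
      obtain ⟨t, htc, hxt⟩ := hx
      exact (hcP htc).1 hxt
    · intro x hx y hy hxy
      obtain ⟨t₁, ht₁, hx₁⟩ := hx
      obtain ⟨t₂, ht₂, hy₂⟩ := hy
      rcases hchain.total ht₁ ht₂ with h | h
      · exact (hcP ht₂).2 x (h hx₁) y hy₂ hxy
      · exact (hcP ht₁).2 x hx₁ y (h hy₂) hxy) {X₀} h0
  have hS : S ∈ P := hSmax.1
  have hSC : S ⊆ C := hS.1
  have hSsep : ∀ x ∈ S, ∀ y ∈ S, x ≠ y → s / 2 ≤ dist x y := hS.2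
  have hSne : S.Nonempty := ⟨X₀, hsub rfl⟩
  -- every point of C is within s/2 of S
  have hnear : ∀ X ∈ C, ∃ Y ∈ S, dist X Y < s / 2 := by
    intro X hX
    by_contra h
    push_neg at h
    have hins : insert X S ∈ P := by
      constructor
      · exact Set.insert_subset hX hSC
      · intro x hx y hy hxy
        rcases hx with rfl | hx
        · rcases hy with rfl | hy
          · exact absurd rfl hxy
          · exact h y hy
        · rcases hy with rfl | hy
          · rw [dist_comm]; exact h x hx
          · exact hSsep x hx y hy hxy
    have hXS : X ∈ S := hSmax.2 hins (Set.subset_insert X S) (Set.mem_insert X S)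
    have := h X hXS
    simp at this
    linarith
  -- π-values on S are δ-separated
  have hπsep : ∀ Y ∈ S, ∀ Y' ∈ S, Y ≠ Y' → δ ≤ |π Y - π Y'| := by
    intro Y hY Y' hY' hne
    have h1 := (hπ Y (hSC hY) Y' (hSC hY')).1
    have h2 := hSsep Y hY Y' hY' hne
    have hnn : (0:ℝ) ≤ 1 - 2 * τ := by linarith
    calc δ = (1 - 2 * τ) * (s / 2) := hδdef
      _ ≤ (1 - 2 * τ) * dist Y Y' := by
          exact mul_le_mul_of_nonneg_left h2 hnn
      _ ≤ |π Y - π Y'| := h1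
  -- values of π on S live in an interval of length 4r
  have hπ4r : ∀ Y ∈ S, ∀ Y' ∈ S, |π Y - π Y'| ≤ 4 * r := fun Y hY Y' hY' =>
    le_trans (hπ Y (hSC hY) Y' (hSC hY')).2 (hdist4r Y (hSC hY) Y' (hSC hY'))
  set m : ℝ := sInf (π '' S) with hmdef
  have hbdd : BddBelow (π '' S) := by
    refine ⟨π X₀ - 4 * r, ?_⟩
    rintro v ⟨Y, hY, rfl⟩
    have := hπ4r X₀ (hsub rfl) Y hY
    have := abs_le.mp this
    linarith [this.2]
  have hm_le : ∀ Y ∈ S, m ≤ π Y := fun Y hY => csInf_le hbdd ⟨Y, hY, rfl⟩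
  have hle_m : ∀ Y ∈ S, π Y ≤ m + 4 * r := by
    intro Y hY
    have : π Y - 4 * r ≤ m := by
      apply le_csInf (hSne.image π)
      rintro v ⟨Y', hY', rfl⟩
      have := abs_le.mp (hπ4r Y hY Y' hY')
      linarith [this.1]
    linarith
  -- the floor map
  set f : Z → ℤ := fun Y => ⌊(π Y - m) / δ⌋ with hfdef
  have hmaps : ∀ Y ∈ S, f Y ∈ Finset.Icc (0:ℤ) ⌊4 * r / δ⌋ := by
    intro Y hY
    rw [Finset.mem_Icc]
    constructor
    · exact Int.floor_nonneg.mpr (div_nonneg (by linarith [hm_le Y hY]) hδ.le)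
    · apply Int.floor_le_floor
      apply div_le_div_of_nonneg_right ?_ hδ.le
      linarith [hle_m Y hY]
  have hinj : Set.InjOn f S := by
    intro Y hY Y' hY' heq
    by_contra hne
    have hsep := hπsep Y hY Y' hY' hne
    have hcast : ((f Y : ℤ) : ℝ) = ((f Y' : ℤ) : ℝ) := by rw [heq]
    have hx1 : (π Y - m) / δ < (f Y : ℝ) + 1 := Int.lt_floor_add_one _
    have hx2 : ((f Y : ℤ) : ℝ) ≤ (π Y - m) / δ := Int.floor_le _
    have hy1 : (π Y' - m) / δ < (f Y' : ℝ) + 1 := Int.lt_floor_add_one _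
    have hy2 : ((f Y' : ℤ) : ℝ) ≤ (π Y' - m) / δ := Int.floor_le _
    have habs : |(π Y - m) / δ - (π Y' - m) / δ| < 1 := by
      rw [abs_sub_lt_iff]
      constructor <;> linarith
    have : |π Y - π Y'| / δ < 1 := by
      have heqd : (π Y - m) / δ - (π Y' - m) / δ = (π Y - π Y') / δ := by ring
      rw [heqd, abs_div, abs_of_pos hδ] at habs
      exact habs
    rw [div_lt_one hδ] at this
    linarith
  -- S is finite
  have hfin : S.Finite := by
    apply Set.Finite.of_finite_image ?_ hinj
    apply Set.Finite.subset (Finset.Icc (0:ℤ) ⌊4 * r / δ⌋).finite_toSet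
    rintro _ ⟨Y, hY, rfl⟩
    exact hmaps Y hY
  set F : Finset Z := hfin.toFinset with hFdef
  have hFS : ∀ x, x ∈ F ↔ x ∈ S := fun x => hfin.mem_toFinset
  -- cardinality bound
  have hcard : F.card ≤ (Finset.Icc (0:ℤ) ⌊4 * r / δ⌋).card := by
    apply Finset.card_le_card_of_injOn f (fun a ha => hmaps a ((hFS a).mp ha))
    intro a ha b hb
    exact hinj ((hFS a).mp (by simpa using ha)) ((hFS b).mp (by simpa using hb))
  have hcardR : (F.card : ℝ) ≤ 4 * r / δ + 1 := by
    have h0 : (0:ℤ) ≤ ⌊4 * r / δ⌋ := Int.floor_nonneg.mpr (by positivity)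
    have h1 : (F.card : ℤ) ≤ ⌊4 * r / δ⌋ + 1 := by
      have := hcard
      rw [Int.card_Icc] at this
      omega
    have h2 : ((F.card : ℤ) : ℝ) ≤ ((⌊4 * r / δ⌋ + 1 : ℤ) : ℝ) := by exact_mod_cast h1
    push_cast at h2
    linarith [Int.floor_le (4 * r / δ)]
  -- covering
  have hcover : {z : Z | Metric.infDist z C ≤ s} ⊆ ⋃ Y ∈ F, Metric.ball Y (2 * s) := by
    intro z hz
    simp only [Set.mem_setOf_eq] at hz
    have hlt : Metric.infDist z C < s + s / 4 := lt_of_le_of_lt hz (by linarith)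
    obtain ⟨X, hX, hzX⟩ := (Metric.infDist_lt_iff ⟨X₀, hX₀⟩).mp hlt
    obtain ⟨Y, hY, hXY⟩ := hnear X hX
    refine Set.mem_biUnion ((hFS Y).mpr hY) ?_
    rw [Metric.mem_ball]
    calc dist z Y ≤ dist z X + dist X Y := dist_triangle z X Y
      _ < 2 * s := by linarith
  -- the measure computation
  calc μ {z : Z | Metric.infDist z C ≤ s}
      ≤ μ (⋃ Y ∈ F, Metric.ball Y (2 * s)) := measure_mono hcover
    _ ≤ ∑ Y ∈ F, μ (Metric.ball Y (2 * s)) := measure_biUnion_finset_le F _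
    _ ≤ ∑ _Y ∈ F, ENNReal.ofReal (Λ * s ^ 4) :=
        Finset.sum_le_sum fun Y hY => hball Y (hSC ((hFS Y).mp hY))
    _ = (F.card : ENNReal) * ENNReal.ofReal (Λ * s ^ 4) := by
        rw [Finset.sum_const, nsmul_eq_mul]
    _ = ENNReal.ofReal ((F.card : ℝ) * (Λ * s ^ 4)) := by
        rw [← ENNReal.ofReal_natCast F.card,
          ← ENNReal.ofReal_mul (by positivity : (0:ℝ) ≤ (F.card : ℝ))]
    _ ≤ ENNReal.ofReal (10 * Λ * s ^ 3 * r) := by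
        apply ENNReal.ofReal_le_ofReal
        -- real arithmetic
        have hcs : (F.card : ℝ) * s ≤ 9 * r + s := by
          have h1 : 4 * r / δ * s ≤ 9 * r := by
            rw [div_mul_eq_mul_div, div_le_iff₀ hδ]
            rw [hδdef]
            nlinarith [mul_pos hr hs]
          have h2 : (F.card : ℝ) * s ≤ (4 * r / δ + 1) * s :=
            mul_le_mul_of_nonneg_right hcardR hs.le
          nlinarith [h2, h1]
        nlinarith [mul_le_mul_of_nonneg_right hcs (by positivity : (0:ℝ) ≤ Λ * s ^ 3),
          mul_le_mul_of_nonneg_right hsr (by positivity : (0:ℝ) ≤ Λ * s ^ 3)]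
end
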